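/- For a permutation τ and values a₁, a₂, …, a_k, the relations a₁ ≺ a₂ ≺ ⋯ ≺ a_k hold in P(τ) (i.e., they form a chain of P(τ)) if and only if a₁, a₂, …, a_k appear in this order in τ and for each i with 1 ≤ i ≤ k−1, either a_i > a_{i+1}, or a_i < a_{i+1} and there is a value b_i appearing between a_i and a_{i+1} in τ with b_i > a_{i+1}. -/

import Mathlib

/-- A permutation of length `n` (a bijection of `{0, …, n-1}`, identified with the
sequence of its values), packaged with its length. -/
abbrev PermSig : Type := Σ n : ℕ, Equiv.Perm (Fin n)

/-- Pattern containment: the permutation `α` of length `k` is contained in the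
permutation `τ` of length `n` if there is an increasing choice of positions on which
`τ` is order-isomorphic to `α`. -/
def Contains {k n : ℕ} (α : Equiv.Perm (Fin k)) (τ : Equiv.Perm (Fin n)) : Prop :=
  ∃ f : Fin k ↪o Fin n, ∀ i j : Fin k, α i < α j ↔ τ (f i) < τ (f j)

/-- The avoidance class `Av B`: all permutations containing no member of `B`. -/
def Av (B : Set PermSig) : Set PermSig :=
  {τ : PermSig | ∀ β ∈ B, ¬ Contains β.2 τ.2}

/-- A pattern class: a set of permutations downward closed under pattern containment. -/
def IsPatternClass (C : Set PermSig) : Prop :=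
  ∀ (k n : ℕ) (α : Equiv.Perm (Fin k)) (τ : Equiv.Perm (Fin n)),
    Contains α τ → (⟨n, τ⟩ : PermSig) ∈ C → (⟨k, α⟩ : PermSig) ∈ C

/-- The base relation of the poset `P(τ)` on values: `x ≺ y` whenever `x` appears
before `y` in `τ` and either `x > y`, or some value `z` appears between `x` and `y`
in `τ` with `x < y < z`. -/
def PQBase {n : ℕ} (τ : Equiv.Perm (Fin n)) (x y : Fin n) : Prop :=
  τ.symm x < τ.symm y ∧
    (y < x ∨ ∃ z : Fin n, τ.symm x < τ.symm z ∧ τ.symm z < τ.symm y ∧ x < y ∧ y < z)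

/-- The poset `P(τ)`: the transitive closure of the base relation. -/
def PQ {n : ℕ} (τ : Equiv.Perm (Fin n)) : Fin n → Fin n → Prop :=
  Relation.TransGen (PQBase τ)

/-- `σ` is a linear extension of `P(τ)`; equivalently, `(σ, τ)` is an allowable pair,
i.e. a priority queue can produce output `τ` from input `σ`. -/
def Allowable {n : ℕ} (σ τ : Equiv.Perm (Fin n)) : Prop :=
  ∀ x y : Fin n, PQ τ x y → σ.symm x < σ.symm y

/-- `C𝒜`: the set of permutations obtainable by a priority queue from an input in `C`. -/
def ImageA (C : Set PermSig) : Set PermSig :=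
  {τ : PermSig | ∃ σ : Equiv.Perm (Fin τ.1), (⟨τ.1, σ⟩ : PermSig) ∈ C ∧ Allowable σ τ.2}

/-- The relations `a 0 ≺ a 1 ≺ ⋯ ≺ a (k-1)` hold in `P(τ)` if and only if the values
`a 0, …, a (k-1)` appear in this order in `τ` and, for each `i`, either
`a i > a (i+1)`, or `a i < a (i+1)` and some value `b` appears between `a i` and
`a (i+1)` in `τ` with `b > a (i+1)`. -/

lemma pqbase_trans {n : ℕ} (τ : Equiv.Perm (Fin n)) : Transitive (PQBase τ) := by
  rintro x y z ⟨hxy, hx⟩ ⟨hyz, hy⟩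
  refine ⟨hxy.trans hyz, ?_⟩
  rcases hx with hyx | ⟨w, hw1, hw2, hxy', hyw⟩
  · rcases hy with hzy | ⟨w, hw1, hw2, hyz', hzw⟩
    · exact Or.inl (hzy.trans hyx)
    · rcases lt_or_ge z x with h | h
      · exact Or.inl h
      · have hxz : x < z := lt_of_le_of_ne h (by rintro rfl; exact absurd (hxy.trans hyz) (lt_irrefl _))
        exact Or.inr ⟨w, hxy.trans hw1, hw2, hxz, hzw⟩
  · rcases hy with hzy | ⟨w', hw1', hw2', hyz', hzw'⟩
    · rcases lt_or_ge z x with h | h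
      · exact Or.inl h
      · have hxz : x < z := lt_of_le_of_ne h (by rintro rfl; exact absurd (hxy.trans hyz) (lt_irrefl _))
        exact Or.inr ⟨w, hw1, hw2.trans hyz, hxz, hzy.trans hyw⟩
    · exact Or.inr ⟨w', hxy.trans hw1', hw2', hxy'.trans hyz', hzw'⟩

lemma pq_iff_pqbase {n : ℕ} (τ : Equiv.Perm (Fin n)) (x y : Fin n) :
    PQ τ x y ↔ PQBase τ x y := by
  unfold PQ
  haveI : IsTrans (Fin n) (PQBase τ) := ⟨fun _ _ _ h1 h2 => pqbase_trans τ h1 h2⟩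
  rw [Relation.transGen_eq_self]

theorem chain_iff_subsequence {k n : ℕ} (hk : 1 ≤ k) (τ : Equiv.Perm (Fin n))
    (a : Fin k → Fin n) :
    (∀ (i : ℕ) (h : i + 1 < k),
        PQ τ (a ⟨i, Nat.lt_of_succ_lt h⟩) (a ⟨i + 1, h⟩)) ↔
      (∀ (i : ℕ) (h : i + 1 < k),
        τ.symm (a ⟨i, Nat.lt_of_succ_lt h⟩) < τ.symm (a ⟨i + 1, h⟩) ∧
          (a ⟨i + 1, h⟩ < a ⟨i, Nat.lt_of_succ_lt h⟩ ∨
            (a ⟨i, Nat.lt_of_succ_lt h⟩ < a ⟨i + 1, h⟩ ∧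
              ∃ b : Fin n, τ.symm (a ⟨i, Nat.lt_of_succ_lt h⟩) < τ.symm b ∧
                τ.symm b < τ.symm (a ⟨i + 1, h⟩) ∧ a ⟨i + 1, h⟩ < b))) := by
  constructor
  · intro H i h
    obtain ⟨h1, h2⟩ := (pq_iff_pqbase τ _ _).mp (H i h)
    refine ⟨h1, ?_⟩
    rcases h2 with h2 | ⟨b, hb1, hb2, hb3, hb4⟩
    · exact Or.inl h2
    · exact Or.inr ⟨hb3, b, hb1, hb2, hb4⟩
  · intro H i h
    obtain ⟨h1, h2⟩ := H i h
    refine (pq_iff_pqbase τ _ _).mpr ⟨h1, ?_⟩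
    rcases h2 with h2 | ⟨hlt, b, hb1, hb2, hb3⟩
    · exact Or.inl h2
    · exact Or.inr ⟨b, hb1, hb2, hlt, hb3⟩
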